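/- Let p be a prime, n ≥ 4 an integer with p > n, and let m be an integer with 1 < m < p. Let A be the set of residues {i mod p : 1 ≤ i ≤ ⌊(p-1)/n⌋} in F_p, and assume A is nonempty (equivalently p - 1 ≥ n). Then multiplication by m in F_p* does not map A into A; that is, there exists a ∈ A with m·a ∉ A. -/
import Mathlib


theorem stmt_7 (p n m : ℕ) (hp : p.Prime) (hn : 4 ≤ n) (hpn : n < p)
    (hm1 : 1 < m) (hm2 : m < p)
    (A : Finset (ZMod p)) (hA : A = (Finset.Icc 1 ((p - 1) / n)).image (fun i : ℕ => (i : ZMod p)))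
    (hne : A.Nonempty) :
    ∃ a ∈ A, (m : ZMod p) * a ∉ A := by
  have hk4 : (p - 1) / n ≤ (p - 1) / 4 := Nat.div_le_div_left hn (by norm_num)
  have h4k : 4 * ((p - 1) / 4) ≤ p - 1 := Nat.mul_div_le _ _
  obtain ⟨k, hkdef⟩ : ∃ k, (p - 1) / n = k := ⟨_, rfl⟩
  rw [hkdef] at hA hk4
  subst hA
  have hk1 : 1 ≤ k := by
    rcases Finset.image_nonempty.mp hne with ⟨i, hi⟩
    rw [Finset.mem_Icc] at hi
    omega
  have h2k : 2 * k < p := by omega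
  have hmem : ∀ x : ℕ, x < p →
      (((x : ZMod p) ∈ (Finset.Icc 1 k).image (fun i : ℕ => (i : ZMod p))) ↔ 1 ≤ x ∧ x ≤ k) := by
    intro x hx
    simp only [Finset.mem_image, Finset.mem_Icc]
    constructor
    · rintro ⟨i, ⟨h1, h2⟩, hix⟩
      have hi : i < p := by omega
      have hv1 : ((i : ZMod p)).val = i := ZMod.val_cast_of_lt hi
      have hv2 : ((x : ZMod p)).val = x := ZMod.val_cast_of_lt hx
      have : i = x := by rw [← hv1, ← hv2, hix]
      omega
    · rintro ⟨h1, h2⟩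
      exact ⟨x, ⟨h1, h2⟩, rfl⟩
  by_cases hmk : m ≤ k
  · obtain ⟨q, hqdef⟩ : ∃ q, k / m = q := ⟨_, rfl⟩
    have hdm : m * q + k % m = k := by rw [← hqdef]; exact Nat.div_add_mod k m
    have hmod : k % m < m := Nat.mod_lt _ (by omega)
    have hqk : q < k := by rw [← hqdef]; exact Nat.div_lt_self (by omega) hm1
    have hms : m * (q + 1) = m * q + m := by ring
    refine ⟨((q + 1 : ℕ) : ZMod p), (hmem _ (by omega)).mpr ⟨by omega, by omega⟩, ?_⟩
    have heq : (m : ZMod p) * ((q + 1 : ℕ) : ZMod p) = ((m * (q + 1) : ℕ) : ZMod p) := by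
      push_cast; ring
    rw [heq, hmem _ (by omega)]
    omega
  · refine ⟨((1 : ℕ) : ZMod p), (hmem 1 (by omega)).mpr ⟨le_refl _, hk1⟩, ?_⟩
    have heq : (m : ZMod p) * ((1 : ℕ) : ZMod p) = ((m : ℕ) : ZMod p) := by push_cast; ring
    rw [heq, hmem _ hm2]
    omega
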